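/- For a Nash equilibrium f, a star A of the Delaunay triangulation with maximal cell radius r, and W the sum of Voronoi cells of players in A, the restricted cost satisfies cost_W(f) >= r(r-1)/(2k). -/

import Mathlib

open Finset
open scoped Classical

noncomputable def cell {V : Type*} [Fintype V] (G : SimpleGraph V) {k : ℕ}
    (f : Fin k → V) (i : Fin k) (v : V) : ℚ :=
  if G.edist v (f i) = ⨅ j, G.edist v (f j) then
    (1 : ℚ) / (Finset.univ.filter fun j => G.edist v (f j) = ⨅ j', G.edist v (f j')).card
  else 0

noncomputable def payoff {V : Type*} [Fintype V] (G : SimpleGraph V) {k : ℕ}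
    (f : Fin k → V) (i : Fin k) : ℚ :=
  ∑ v, cell G f i v

def IsNashEq {V : Type*} [Fintype V] (G : SimpleGraph V) {k : ℕ} (f : Fin k → V) : Prop :=
  ∀ (i : Fin k) (x : V), payoff G (Function.update f i x) i ≤ payoff G f i

/-- The radius of the Voronoi cell of player `i`: the largest distance from `f i` to a
vertex fractionally assigned to player `i`. -/
noncomputable def cellRadius {V : Type*} [Fintype V] (G : SimpleGraph V) {k : ℕ}
    (f : Fin k → V) (i : Fin k) : ℕ :=
  (Finset.univ.filter fun v => 0 < cell G f i v).sup fun v => (G.edist v (f i)).toNat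

/-- The Delaunay triangulation of a strategy profile: the graph on the players where
`i` and `j` are adjacent if their Voronoi cells share a vertex, or contain two
adjacent vertices respectively. -/
noncomputable def delaunay {V : Type*} [Fintype V] (G : SimpleGraph V) {k : ℕ}
    (f : Fin k → V) : SimpleGraph (Fin k) where
  Adj i j := i ≠ j ∧
    ((∃ v, 0 < cell G f i v ∧ 0 < cell G f j v) ∨
      ∃ v v', G.Adj v v' ∧ 0 < cell G f i v ∧ 0 < cell G f j v')
  symm := by
    constructor
    rintro i j ⟨hne, ⟨v, h1, h2⟩ | ⟨v, v', hvv, h1, h2⟩⟩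
    · exact ⟨hne.symm, Or.inl ⟨v, h2, h1⟩⟩
    · exact ⟨hne.symm, Or.inr ⟨v', v, hvv.symm, h2, h1⟩⟩
  loopless := by constructor; rintro i ⟨h, -⟩; exact h rfl

/-- A star in a graph: a vertex set of size at least 2 with a center adjacent to
all other vertices of the set. -/
def IsStar {V : Type*} [DecidableEq V] (G : SimpleGraph V) (A : Finset V) : Prop :=
  2 ≤ A.card ∧ ∃ v0 ∈ A, ∀ v ∈ A, v ≠ v0 → G.Adj v0 v

/-- The cost of a profile restricted to a nonnegative weight vector `W`. -/
noncomputable def costW {V : Type*} [Fintype V] (G : SimpleGraph V) (W : V → ℚ)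
    {k : ℕ} (f : Fin k → V) : ℚ :=
  ∑ v, W v * ((⨅ i, G.edist v (f i)).toNat : ℚ)


section auxSt17
variable {V : Type*} [Fintype V] (G : SimpleGraph V) {k : ℕ} (f : Fin k → V)

lemma cell_nonneg' (i : Fin k) (v : V) : 0 ≤ cell G f i v := by
  unfold cell; split <;> positivity

lemma cell_pos_cond' {i : Fin k} {v : V} (h : 0 < cell G f i v) :
    G.edist v (f i) = ⨅ j, G.edist v (f j) := by
  by_contra hc; rw [cell, if_neg hc] at h; exact lt_irrefl _ h

lemma one_div_k_le_cell' {i : Fin k} {v : V}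
    (h : G.edist v (f i) = ⨅ j, G.edist v (f j)) :
    (1 : ℚ) / k ≤ cell G f i v := by
  rw [cell, if_pos h]
  have h1 : i ∈ Finset.univ.filter fun j => G.edist v (f j) = ⨅ j', G.edist v (f j') := by
    simp [h]
  have hc1 : 0 < ((Finset.univ.filter fun j => G.edist v (f j) = ⨅ j', G.edist v (f j')).card : ℚ) := by
    exact_mod_cast Finset.card_pos.mpr ⟨i, h1⟩
  have hc2 : ((Finset.univ.filter fun j => G.edist v (f j) = ⨅ j', G.edist v (f j')).card : ℚ) ≤ k := by
    exact_mod_cast (Finset.card_filter_le univ _).trans_eq (by simp)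
  exact one_div_le_one_div_of_le hc1 hc2

lemma exists_min_edist' (hk : 0 < k) (v : V) :
    ∃ j, G.edist v (f j) = ⨅ j', G.edist v (f j') := by
  have : Nonempty (Fin k) := ⟨⟨0, hk⟩⟩
  obtain ⟨j, hj⟩ := Finite.exists_min fun j => G.edist v (f j)
  exact ⟨j, le_antisymm (le_iInf hj) (iInf_le _ j)⟩

end auxSt17

lemma walk_length_drop' {V : Type*} {G : SimpleGraph V} {u v : V} (p : G.Walk u v) (n : ℕ) :
    (p.drop n).length = p.length - n := by
  induction p generalizing n with
  | nil => simp [SimpleGraph.Walk.drop]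
  | cons h q ih =>
    cases n with
    | zero => simp [SimpleGraph.Walk.drop]
    | succ n => simp [SimpleGraph.Walk.drop, ih]

lemma dist_getVert_right' {V : Type*} {G : SimpleGraph V} {u v : V} (p : G.Walk u v) (t : ℕ) :
    G.dist (p.getVert t) v ≤ p.length - t := by
  have := SimpleGraph.dist_le (p.drop t)
  rwa [walk_length_drop'] at this

lemma two_mul_sum_Icc_one (r : ℕ) : 2 * ∑ t ∈ Finset.Icc 1 r, t = r * (r + 1) := by
  induction r with
  | zero => simp
  | succ n ih => rw [Finset.sum_Icc_succ_top (by omega), Nat.mul_add, ih]; ring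

lemma dist_getVert_left' {V : Type*} {G : SimpleGraph V} {u v : V} (p : G.Walk u v) {t : ℕ}
    (ht : t ≤ p.length) : G.dist u (p.getVert t) ≤ t := by
  have h1 : p.reverse.getVert (p.length - t) = p.getVert t := by
    rw [SimpleGraph.Walk.getVert_reverse]; congr 1; omega
  have h2 := SimpleGraph.dist_le (p.reverse.drop (p.length - t))
  rw [walk_length_drop', SimpleGraph.Walk.length_reverse, h1] at h2
  rw [SimpleGraph.dist_comm]
  exact h2.trans (by omega)

/-- For a Nash equilibrium `f`, a star `A` of the Delaunay triangulation with maximal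
cell radius `r`, and `W` the sum of the Voronoi cells of the players of `A`, the
restricted cost satisfies `cost_W(f) ≥ r(r-1)/(2k)`. -/
theorem stmt17 {V : Type*} [Fintype V] [DecidableEq V] (G : SimpleGraph V)
    (hG : G.Connected) (k : ℕ) (hk : 0 < k) (hkn : k < Fintype.card V)
    (f : Fin k → V) (hf : IsNashEq G f)
    (A : Finset (Fin k)) (hA : IsStar (delaunay G f) A)
    (r : ℕ) (hr : r = A.sup fun i => cellRadius G f i)
    (W : V → ℚ) (hW : W = fun v => ∑ i ∈ A, cell G f i v) :
    (r : ℚ) * ((r : ℚ) - 1) / (2 * k) ≤ costW G W f := by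
  
  classical
  set D : V → ℕ := fun u => (⨅ j, G.edist u (f j)).toNat with hD
  have hWnn : ∀ v, 0 ≤ W v := by
    intro v; rw [hW]; exact Finset.sum_nonneg fun i _ => cell_nonneg' G f i v
  have hcost0 : 0 ≤ costW G W f := by
    apply Finset.sum_nonneg; intro v _
    exact mul_nonneg (hWnn v) (by positivity)
  rcases le_or_gt r 1 with hr1 | hr1
  · have hnum : (r : ℚ) * ((r : ℚ) - 1) ≤ 0 := by
      interval_cases r <;> norm_num
    have h0 : (r : ℚ) * ((r : ℚ) - 1) / (2 * k) ≤ 0 :=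
      div_nonpos_of_nonpos_of_nonneg hnum (by positivity)
    exact h0.trans hcost0
  · -- main case
    have hkQ : (0 : ℚ) < k := by exact_mod_cast hk
    have hfin : ∀ (u w : V), G.edist u w ≠ ⊤ := fun u w =>
      SimpleGraph.edist_ne_top_iff_reachable.mpr (hG u w)
    have hDle : ∀ (u : V) (j : Fin k), D u ≤ G.dist u (f j) := by
      intro u j
      exact ENat.toNat_le_toNat (iInf_le _ j) (hfin _ _)
    obtain ⟨hA2, -⟩ := hA
    have hAne : A.Nonempty := Finset.card_pos.mp (by omega)
    obtain ⟨i₀, hi₀A, hi₀⟩ := Finset.exists_mem_eq_sup A hAne fun i => cellRadius G f i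
    have hri₀ : cellRadius G f i₀ = r := by rw [hr, hi₀]
    have hSne : (Finset.univ.filter fun v => 0 < cell G f i₀ v).Nonempty := by
      by_contra hS
      rw [Finset.not_nonempty_iff_eq_empty] at hS
      rw [cellRadius, hS] at hri₀
      simp at hri₀; omega
    obtain ⟨v₀, hv₀S, hv₀⟩ := Finset.exists_mem_eq_sup _ hSne
      fun v => (G.edist v (f i₀)).toNat
    have hv₀cell : 0 < cell G f i₀ v₀ := (Finset.mem_filter.mp hv₀S).2
    have hv₀eq : G.edist v₀ (f i₀) = ⨅ j, G.edist v₀ (f j) := cell_pos_cond' G f hv₀cell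
    have hdv₀ : G.dist v₀ (f i₀) = r := by
      show (G.edist v₀ (f i₀)).toNat = r
      rw [← hv₀, ← hri₀, cellRadius]
    have hDv₀ : D v₀ = r := by
      show (⨅ j, G.edist v₀ (f j)).toNat = r
      rw [← hv₀eq]; exact hdv₀
    obtain ⟨p, hp⟩ := hG.exists_walk_length_eq_dist (f i₀) v₀
    have hplen : p.length = r := by rw [hp, SimpleGraph.dist_comm]; exact hdv₀
    have key : ∀ t ∈ Finset.Icc 1 r,
        D (p.getVert t) = t ∧ (1 : ℚ) / k ≤ W (p.getVert t) := by
      intro t ht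
      rw [Finset.mem_Icc] at ht
      have ht1 : 1 ≤ t := ht.1
      have htr : t ≤ r := ht.2
      have h1 : G.dist (f i₀) (p.getVert t) ≤ t := dist_getVert_left' p (by omega)
      have h2 : G.dist (p.getVert t) v₀ ≤ r - t := by
        have := dist_getVert_right' p t
        rwa [hplen] at this
      have h7 : D (p.getVert t) ≤ t := by
        refine (hDle (p.getVert t) i₀).trans ?_
        rw [SimpleGraph.dist_comm]; exact h1
      have h3 : t ≤ D (p.getVert t) := by
        obtain ⟨j, hj⟩ := exists_min_edist' G f hk (p.getVert t)
        have hDj : D (p.getVert t) = G.dist (p.getVert t) (f j) := by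
          show (⨅ j', G.edist (p.getVert t) (f j')).toNat = (G.edist (p.getVert t) (f j)).toNat
          rw [hj]
        have h4 : r ≤ G.dist v₀ (f j) := hDv₀ ▸ hDle v₀ j
        have h5 : G.dist v₀ (f j) ≤ G.dist v₀ (p.getVert t) + G.dist (p.getVert t) (f j) :=
          hG.dist_triangle
        have h6 : G.dist v₀ (p.getVert t) ≤ r - t := by
          rw [SimpleGraph.dist_comm]; exact h2
        omega
      have hDt : D (p.getVert t) = t := le_antisymm h7 h3
      refine ⟨hDt, ?_⟩
      have h8 : G.edist (p.getVert t) (f i₀) = ⨅ j, G.edist (p.getVert t) (f j) := by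
        have ha := hfin (p.getVert t) (f i₀)
        have hb : (⨅ j, G.edist (p.getVert t) (f j)) ≠ ⊤ :=
          fun htop => ha (le_antisymm le_top (htop ▸ iInf_le _ i₀))
        refine le_antisymm ?_ (iInf_le _ i₀)
        rw [← ENat.coe_toNat ha, ← ENat.coe_toNat hb, Nat.cast_le]
        show G.dist (p.getVert t) (f i₀) ≤ D (p.getVert t)
        rw [hDt, SimpleGraph.dist_comm]; exact h1
      have h9 : (1 : ℚ) / k ≤ cell G f i₀ (p.getVert t) := one_div_k_le_cell' G f h8
      refine h9.trans ?_
      rw [hW]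
      exact Finset.single_le_sum (fun i _ => cell_nonneg' G f i (p.getVert t)) hi₀A
    have hinj : Set.InjOn (fun t => p.getVert t) (Finset.Icc 1 r) := by
      intro s hs t ht hst
      have := (key s (by simpa using hs)).1
      have h2 := (key t (by simpa using ht)).1
      simp only at hst
      rw [← this, ← h2, hst]
    have step1 : ∑ t ∈ Finset.Icc 1 r, W (p.getVert t) * (D (p.getVert t) : ℚ) ≤ costW G W f := by
      have himg : ∑ v ∈ (Finset.Icc 1 r).image (fun t => p.getVert t), (W v * (D v : ℚ))
          = ∑ t ∈ Finset.Icc 1 r, W (p.getVert t) * (D (p.getVert t) : ℚ) :=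
        Finset.sum_image (fun s hs t ht h => hinj hs ht h)
      rw [← himg]
      refine Finset.sum_le_sum_of_subset_of_nonneg (Finset.subset_univ _) ?_
      intro v _ _
      exact mul_nonneg (hWnn v) (by positivity)
    have step2 : ∑ t ∈ Finset.Icc 1 r, (1 : ℚ) / k * t ≤
        ∑ t ∈ Finset.Icc 1 r, W (p.getVert t) * (D (p.getVert t) : ℚ) := by
      refine Finset.sum_le_sum ?_
      intro t ht
      obtain ⟨hDt, hWt⟩ := key t ht
      rw [hDt]
      have htpos : (0 : ℚ) ≤ t := by positivity
      exact mul_le_mul_of_nonneg_right hWt htpos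
    have hgauss : r * (r - 1) ≤ 2 * ∑ t ∈ Finset.Icc 1 r, t := by
      rw [two_mul_sum_Icc_one]
      exact Nat.mul_le_mul_left r (by omega)
    have hgaussQ : (r : ℚ) * ((r : ℚ) - 1) / (2 * k) ≤ ∑ t ∈ Finset.Icc 1 r, (1 : ℚ) / k * t := by
      have hsum : ∑ t ∈ Finset.Icc 1 r, (1 : ℚ) / k * t
          = (∑ t ∈ Finset.Icc 1 r, (t : ℚ)) / k := by
        rw [Finset.sum_div]
        exact Finset.sum_congr rfl fun t _ => by rw [one_div, inv_mul_eq_div]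
      rw [hsum]
      rw [div_le_div_iff₀ (by positivity) hkQ]
      have hcast : ((2 * ∑ t ∈ Finset.Icc 1 r, t : ℕ) : ℚ) = 2 * ∑ t ∈ Finset.Icc 1 r, (t : ℚ) := by
        push_cast; ring
      have hc2 : (r : ℚ) * ((r : ℚ) - 1) ≤ 2 * ∑ t ∈ Finset.Icc 1 r, (t : ℚ) := by
        rw [← hcast]
        have : ((r * (r - 1) : ℕ) : ℚ) = (r : ℚ) * ((r : ℚ) - 1) := by
          have : 1 ≤ r := by omega
          push_cast [this]; ring
        rw [← this]
        exact_mod_cast hgauss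
      calc (r : ℚ) * ((r : ℚ) - 1) * k ≤ (2 * ∑ t ∈ Finset.Icc 1 r, (t : ℚ)) * k := by
            exact mul_le_mul_of_nonneg_right hc2 (le_of_lt hkQ)
        _ = (∑ t ∈ Finset.Icc 1 r, (t : ℚ)) * (2 * k) := by ring
    exact hgaussQ.trans (step2.trans step1)
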